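/- Let n ≥ 2 and let c_{ij} ∈ ℂ for 0 ≤ i, j ≤ n with c_{ij} = c_{ji} and c_{ii} = 0. Let C be the (n+2)×(n+2) symmetric matrix, with rows and columns indexed by {0,…,n} ∪ {ψ}, whose (i,j) entry is c_{ij} for 0 ≤ i, j ≤ n, whose (i,ψ) and (ψ,i) entries are n−1 for 0 ≤ i ≤ n, and whose (ψ,ψ) entry is 0. Assume that every principal submatrix of C of size at least 2 is invertible. If (θ_0,…,θ_n,ψ) ∈ ℂ^{n+2} is a nonzero vector satisfying θ_i · ((n−1)ψ + ∑_{j ∈ {0,…,n}, j ≠ i} c_{ij} θ_j) = 0 for every i ∈ {0,…,n} and ψ · (θ_0 + ⋯ + θ_n) = 0, then exactly one of the n+2 coordinates θ_0,…,θ_n,ψ is nonzero; i.e., the vector is a scalar multiple of a standard basis vector of ℂ^{n+2}. -/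
import Mathlib


open Finset Matrix

/-- The coefficient matrix `C` of the linear part of the homogenized score
equation system of the Brownian motion tree model on the star tree with
`n + 1` leaves: the rows and columns are indexed by `{0, …, n} ∪ {ψ}`
(realized as `Fin (n+1) ⊕ Unit`), the `(i,j)` entry equals `c_{ij}` for
`0 ≤ i, j ≤ n`, the `(i,ψ)` and `(ψ,i)` entries equal `n − 1`, and the
`(ψ,ψ)` entry is `0`. -/
def scoreCoeffMatrix (n : ℕ) (c : Fin (n + 1) → Fin (n + 1) → ℂ) :
    Matrix (Fin (n + 1) ⊕ Unit) (Fin (n + 1) ⊕ Unit) ℂ :=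
  Matrix.of fun x y =>
    Sum.elim
      (fun i => Sum.elim (fun j => c i j) (fun _ => (n : ℂ) - 1) y)
      (fun _ => Sum.elim (fun _ => (n : ℂ) - 1) (fun _ => (0 : ℂ)) y) x

/-- **Lemma 15 (solutions with `z = 0` of the homogenized score equations).**
Let `n ≥ 2` and let `c_{ij} ∈ ℂ` (`0 ≤ i, j ≤ n`) satisfy `c_{ij} = c_{ji}`
and `c_{ii} = 0`.  Assume every principal submatrix of size at least `2` of
the associated coefficient matrix `C` is invertible.  If
`(θ_0, …, θ_n, ψ) ∈ ℂ^{n+2}` is a nonzero vector satisfying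
`θ_i · ((n−1)ψ + ∑_{j ≠ i} c_{ij} θ_j) = 0` for all `i` and
`ψ · (θ_0 + ⋯ + θ_n) = 0`, then exactly one of the `n + 2` coordinates is
nonzero, i.e. the vector is a scalar multiple of a standard basis vector. -/
theorem solutions_z_eq_zero {n : ℕ} (hn : 2 ≤ n)
    (c : Fin (n + 1) → Fin (n + 1) → ℂ)
    (hsymm : ∀ i j, c i j = c j i) (hdiag : ∀ i, c i i = 0)
    (hC : ∀ I : Finset (Fin (n + 1) ⊕ Unit), 2 ≤ I.card →
      IsUnit (((scoreCoeffMatrix n c).submatrix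
        (fun x : {a // a ∈ I} => (x : Fin (n + 1) ⊕ Unit))
        (fun x : {a // a ∈ I} => (x : Fin (n + 1) ⊕ Unit))).det))
    (θ : Fin (n + 1) → ℂ) (ψ : ℂ)
    (hnz : Sum.elim θ (fun _ : Unit => ψ) ≠ 0)
    (heq : ∀ i, θ i * (((n : ℂ) - 1) * ψ
      + ∑ j ∈ Finset.univ.erase i, c i j * θ j) = 0)
    (heqψ : ψ * ∑ i, θ i = 0) :
    ∃! x : Fin (n + 1) ⊕ Unit, Sum.elim θ (fun _ : Unit => ψ) x ≠ 0 := by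
  set v : Fin (n + 1) ⊕ Unit → ℂ := Sum.elim θ (fun _ : Unit => ψ) with hv
  set S : Finset (Fin (n + 1) ⊕ Unit) := Finset.univ.filter (fun x => v x ≠ 0) with hS
  -- key: for every x with v x ≠ 0, the row equation holds
  have hrow : ∀ x, v x ≠ 0 → ∑ y, scoreCoeffMatrix n c x y * v y = 0 := by
    rintro (i | u) hx
    · have hθ : θ i ≠ 0 := hx
      have h0 : ((n : ℂ) - 1) * ψ + ∑ j ∈ Finset.univ.erase i, c i j * θ j = 0 := by
        have := heq i
        rcases mul_eq_zero.1 this with h | h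
        · exact absurd h hθ
        · exact h
      rw [Fintype.sum_sum_type]
      simp only [scoreCoeffMatrix, Matrix.of_apply, Sum.elim_inl, Sum.elim_inr, hv]
      have hsum : ∑ j, c i j * θ j = ∑ j ∈ Finset.univ.erase i, c i j * θ j := by
        rw [← Finset.sum_erase]
        simp [hdiag i]
      rw [hsum]
      simp only [Finset.univ_unique, Finset.sum_singleton]
      linear_combination h0
    · have hψ : ψ ≠ 0 := hx
      have hsum0 : ∑ i, θ i = 0 := by
        rcases mul_eq_zero.1 heqψ with h | h
        · exact absurd h hψ
        · exact h
      rw [Fintype.sum_sum_type]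
      simp only [scoreCoeffMatrix, Matrix.of_apply, Sum.elim_inl, Sum.elim_inr, hv]
      rw [← Finset.mul_sum]
      simp [hsum0]
  -- v vanishes off S
  have hoff : ∀ y, y ∉ S → v y = 0 := by
    intro y hy
    by_contra h
    exact hy (Finset.mem_filter.2 ⟨Finset.mem_univ y, h⟩)
  -- S has at most one element
  have hcard : S.card ≤ 1 := by
    by_contra h
    push_neg at h
    have h2 : 2 ≤ S.card := h
    have hunit := hC S h2
    set M := (scoreCoeffMatrix n c).submatrix
        (fun x : {a // a ∈ S} => (x : Fin (n + 1) ⊕ Unit))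
        (fun x : {a // a ∈ S} => (x : Fin (n + 1) ⊕ Unit)) with hM
    have hinj : Function.Injective M.mulVec :=
      Matrix.mulVec_injective_iff_isUnit.2 ((Matrix.isUnit_iff_isUnit_det M).2 hunit)
    set w : {a // a ∈ S} → ℂ := fun a => v a with hw
    have hMw : M.mulVec w = 0 := by
      funext x
      have hxS : (x : Fin (n + 1) ⊕ Unit) ∈ S := x.2
      have hvx : v x ≠ 0 := (Finset.mem_filter.1 hxS).2
      have := hrow x hvx
      simp only [Matrix.mulVec, dotProduct, Pi.zero_apply, hM, hw,
        Matrix.submatrix_apply]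
      rw [Finset.sum_coe_sort S (fun y => scoreCoeffMatrix n c x y * v y)]
      rw [← Finset.sum_subset (Finset.subset_univ S)] at this
      · exact this
      · intro y _ hy
        rw [hoff y hy, mul_zero]
    have hw0 : w = 0 :=
      hinj (show M.mulVec w = M.mulVec 0 by rw [hMw, Matrix.mulVec_zero])
    -- but S is nonempty with nonzero entries
    obtain ⟨x, hx⟩ := Finset.card_pos.1 (by omega : 0 < S.card)
    have : v x ≠ 0 := (Finset.mem_filter.1 hx).2
    exact this (congrFun hw0 ⟨x, hx⟩)
  -- S is nonempty
  obtain ⟨x₀, hx₀⟩ : ∃ x, v x ≠ 0 := Function.ne_iff.1 hnz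
  have hx₀S : x₀ ∈ S := Finset.mem_filter.2 ⟨Finset.mem_univ _, hx₀⟩
  refine ⟨x₀, hx₀, ?_⟩
  intro y hy
  have hyS : y ∈ S := Finset.mem_filter.2 ⟨Finset.mem_univ _, hy⟩
  by_contra hne
  have : 2 ≤ S.card := by
    have : ({y, x₀} : Finset _) ⊆ S := by
      intro z hz
      rcases Finset.mem_insert.1 hz with rfl | hz
      · exact hyS
      · rw [Finset.mem_singleton.1 hz]; exact hx₀S
    calc 2 = ({y, x₀} : Finset _).card := (Finset.card_pair hne).symm
    _ ≤ S.card := Finset.card_le_card this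
  omega
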